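/- Let Δ ⊆ ℝ⁴ be a reflexive polytope and let v₁, v₂, v₃, v₄ ∈ Δ ∩ ℤ⁴ satisfy v₁ + v₂ + v₃ + v₄ ∈ 3·∂Δ. Then there exist a vertex (extreme point) m of Δ* with m ∈ ℤ⁴ and an index ℓ ∈ {1, 2, 3, 4} such that ⟨m, v_ℓ⟩ = 0 and ⟨m, vᵢ⟩ = −1 for the three indices i ≠ ℓ. -/

import Mathlib

open Pointwise

/-- The standard pairing `⟨m,n⟩ = ∑ i, mᵢ nᵢ` on `ℝ^d`. -/
def pairing {d : ℕ} (m n : Fin d → ℝ) : ℝ := ∑ i, m i * n i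

/-- A point of `ℝ^d` is a lattice point if all coordinates are integers. -/
def IsLatticePt {d : ℕ} (v : Fin d → ℝ) : Prop := ∀ i, ∃ n : ℤ, v i = (n : ℝ)

/-- The set of lattice points of `ℝ^d`. -/
def latticePts (d : ℕ) : Set (Fin d → ℝ) := {v | IsLatticePt v}

/-- A lattice polytope is the convex hull of finitely many lattice points. -/
def IsLatticePolytope {d : ℕ} (Δ : Set (Fin d → ℝ)) : Prop :=
  ∃ S : Finset (Fin d → ℝ), (S : Set (Fin d → ℝ)) ⊆ latticePts d ∧
    Δ = convexHull ℝ (S : Set (Fin d → ℝ))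

/-- The dual polytope `Δ* = {m : ⟨m,n⟩ ≥ -1 for all n ∈ Δ}`. -/
def dualPolytope {d : ℕ} (Δ : Set (Fin d → ℝ)) : Set (Fin d → ℝ) :=
  {m | ∀ n ∈ Δ, -1 ≤ pairing m n}

/-- A reflexive polytope: a lattice polytope with `0` in its interior
whose dual polytope is again a lattice polytope. -/
def IsReflexive {d : ℕ} (Δ : Set (Fin d → ℝ)) : Prop :=
  IsLatticePolytope Δ ∧ (0 : Fin d → ℝ) ∈ interior Δ ∧ IsLatticePolytope (dualPolytope Δ)

/-- `Cone(v₁,…,v_k) = {r₁v₁ + ⋯ + r_kv_k : rᵢ ≥ 0}`. -/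
def coneOf {d k : ℕ} (v : Fin k → (Fin d → ℝ)) : Set (Fin d → ℝ) :=
  {x | ∃ r : Fin k → ℝ, (∀ i, 0 ≤ r i) ∧ x = ∑ i, r i • v i}

/-- `r·∂Δ`, the frontier (topological boundary) of the dilate `rΔ`. -/
def bdry {d : ℕ} (r : ℝ) (Δ : Set (Fin d → ℝ)) : Set (Fin d → ℝ) := frontier (r • Δ)

/-- The points of `S` lie in a common proper face of `Δ`: there is `u` with
`⟨u,x⟩ ≤ 1` on `Δ` and `⟨u,v⟩ = 1` for all `v ∈ S`. -/
def InCommonFace {d : ℕ} (Δ : Set (Fin d → ℝ)) (S : Set (Fin d → ℝ)) : Prop :=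
  ∃ u : Fin d → ℝ, (∀ x ∈ Δ, pairing u x ≤ 1) ∧ ∀ v ∈ S, pairing u v = 1

/-- Coordinatewise cast of an integer vector to a real vector. -/
def toRealVec {d : ℕ} (n : Fin d → ℤ) : Fin d → ℝ := fun i => (n i : ℝ)

lemma pairing_sum_right {d k : ℕ} (m : Fin d → ℝ) (v : Fin k → (Fin d → ℝ)) :
    pairing m (∑ i, v i) = ∑ i, pairing m (v i) := by
  unfold pairing
  rw [Finset.sum_comm]
  congr 1; ext j
  simp [Finset.mul_sum]

lemma pairing_smul_right {d : ℕ} (m n : Fin d → ℝ) (c : ℝ) :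
    pairing m (c • n) = c * pairing m n := by
  unfold pairing
  rw [Finset.mul_sum]
  congr 1; ext j; simp; ring

lemma pairing_combo_left {d : ℕ} (x y p : Fin d → ℝ) (a b : ℝ) :
    pairing (a • x + b • y) p = a * pairing x p + b * pairing y p := by
  unfold pairing
  rw [Finset.mul_sum, Finset.mul_sum, ← Finset.sum_add_distrib]
  congr 1; ext j; simp; ring

lemma pairing_smul_left {d : ℕ} (m n : Fin d → ℝ) (c : ℝ) :
    pairing (c • m) n = c * pairing m n := by
  unfold pairing
  rw [Finset.mul_sum]
  congr 1; ext j; simp; ring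

lemma clm_eq_pairing {d : ℕ} (f : (Fin d → ℝ) →L[ℝ] ℝ) (x : Fin d → ℝ) :
    f x = pairing (fun i => f (fun j => if i = j then 1 else 0)) x := by
  conv_lhs => rw [pi_eq_sum_univ x, map_sum]
  unfold pairing
  congr 1; ext i
  rw [map_smul]
  simp [mul_comm]

lemma pairing_continuous {d : ℕ} (p : Fin d → ℝ) :
    Continuous (fun m : Fin d → ℝ => pairing m p) := by
  unfold pairing
  exact continuous_finset_sum _ fun i _ => (continuous_apply i).mul continuous_const

lemma int_combo (k : Fin 4 → ℤ) (hb : ∀ i, -1 ≤ k i) (hs : ∑ i, k i = -3) :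
    ∃ l : Fin 4, k l = 0 ∧ ∀ i, i ≠ l → k i = -1 := by
  rw [Fin.sum_univ_four] at hs
  have h0 := hb 0; have h1 := hb 1; have h2 := hb 2; have h3 := hb 3
  have : (k 0 = 0 ∧ k 1 = -1 ∧ k 2 = -1 ∧ k 3 = -1) ∨
      (k 1 = 0 ∧ k 0 = -1 ∧ k 2 = -1 ∧ k 3 = -1) ∨
      (k 2 = 0 ∧ k 0 = -1 ∧ k 1 = -1 ∧ k 3 = -1) ∨
      (k 3 = 0 ∧ k 0 = -1 ∧ k 1 = -1 ∧ k 2 = -1) := by omega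
  rcases this with ⟨h, h'⟩ | ⟨h, h'⟩ | ⟨h, h'⟩ | ⟨h, h'⟩
  · exact ⟨0, h, by intro i hi; fin_cases i <;> simp_all⟩
  · exact ⟨1, h, by intro i hi; fin_cases i <;> simp_all⟩
  · exact ⟨2, h, by intro i hi; fin_cases i <;> simp_all⟩
  · exact ⟨3, h, by intro i hi; fin_cases i <;> simp_all⟩

lemma pairing_int {d : ℕ} {m v : Fin d → ℝ} (hm : IsLatticePt m) (hv : IsLatticePt v) :
    ∃ k : ℤ, pairing m v = (k : ℝ) := by
  choose mz hmz using hm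
  choose vz hvz using hv
  refine ⟨∑ i, mz i * vz i, ?_⟩
  unfold pairing
  push_cast
  congr 1; ext i; rw [hmz i, hvz i]

/-- Supporting hyperplane: a boundary point of `3 • Δ` is supported by some `m ∈ Δ*`. -/
lemma exists_dual_support {d : ℕ} (Δ : Set (Fin d → ℝ)) (hconv : Convex ℝ Δ)
    (hcl : IsClosed Δ) (h0 : (0 : Fin d → ℝ) ∈ interior Δ)
    {p : Fin d → ℝ} (hp : p ∈ frontier ((3 : ℝ) • Δ)) :
    ∃ m, m ∈ dualPolytope Δ ∧ pairing m p = -3 := by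
  set A : Set (Fin d → ℝ) := (3 : ℝ) • Δ with hA
  have hconvA : Convex ℝ A := hconv.smul 3
  have hclA : IsClosed A := by rw [hA]; exact hcl.smul₀ (3 : ℝ)
  have h0A : (0 : Fin d → ℝ) ∈ interior A := by
    rw [hA, interior_smul₀ (by norm_num : (3:ℝ) ≠ 0)]
    exact ⟨0, h0, smul_zero 3⟩
  have hpA : p ∈ A := by
    have := hp.1
    rwa [hclA.closure_eq] at this
  have hpnint : p ∉ interior A := hp.2
  obtain ⟨f, hf⟩ := geometric_hahn_banach_open_point (hconvA.interior) isOpen_interior hpnint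
  have hc : 0 < f p := by
    have := hf 0 h0A
    simpa using this
  -- every point of A satisfies f x ≤ f p
  have hle : ∀ x ∈ A, f x ≤ f p := by
    intro x hx
    by_contra h
    push_neg at h
    have hfx : 0 < f x := lt_trans hc h
    set b : ℝ := f p / f x with hb
    have hb0 : 0 ≤ b := le_of_lt (div_pos hc hfx)
    have hb1 : b < 1 := (div_lt_one hfx).2 h
    have hmem : (1 - b) • (0 : Fin d → ℝ) + b • x ∈ interior A :=
      hconvA.combo_interior_self_mem_interior h0A hx (by linarith) hb0 (by ring)
    have := hf _ hmem
    rw [map_add, map_smul, map_smul, map_zero] at this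
    simp only [smul_zero, smul_eq_mul, zero_add] at this
    rw [hb, div_mul_cancel₀ _ (ne_of_gt hfx)] at this
    linarith
  set w : Fin d → ℝ := fun i => f (fun j => if i = j then 1 else 0) with hw
  refine ⟨(-3 / f p) • w, ?_, ?_⟩
  · intro n hn
    rw [pairing_smul_left, ← clm_eq_pairing]
    have h3n : (3 : ℝ) • n ∈ A := ⟨n, hn, rfl⟩
    have := hle _ h3n
    rw [map_smul] at this
    simp only [smul_eq_mul] at this
    rw [neg_div, neg_mul, neg_le, neg_neg, div_mul_eq_mul_div, div_le_iff₀ hc]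
    linarith
  · rw [pairing_smul_left, ← clm_eq_pairing]
    field_simp

/-- If `v₁,…,v₄` are lattice points of a reflexive 4-polytope `Δ`
with `v₁+v₂+v₃+v₄ ∈ 3·∂Δ`, then there is a lattice vertex `m` of `Δ*` and an index `ℓ`
with `⟨m,v_ℓ⟩ = 0` and `⟨m,vᵢ⟩ = -1` for all `i ≠ ℓ`. -/
theorem exists_dual_vertex_of_sum_in_three_boundary
    (Δ : Set (Fin 4 → ℝ)) (hΔ : IsReflexive Δ)
    (v : Fin 4 → (Fin 4 → ℝ))
    (hvΔ : ∀ i, v i ∈ Δ) (hvL : ∀ i, IsLatticePt (v i))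
    (hsum : (∑ i, v i) ∈ bdry 3 Δ) :
    ∃ m : Fin 4 → ℝ, IsLatticePt m ∧ m ∈ Set.extremePoints ℝ (dualPolytope Δ) ∧
      ∃ l : Fin 4, pairing m (v l) = 0 ∧ ∀ i, i ≠ l → pairing m (v i) = -1 := by
  obtain ⟨⟨S, hSlat, hSeq⟩, h0, ⟨T, hTlat, hTeq⟩⟩ := hΔ
  have hconv : Convex ℝ Δ := hSeq ▸ convex_convexHull ℝ _
  have hcomp : IsCompact Δ := hSeq ▸ S.finite_toSet.isCompact_convexHull ℝ
  set p : Fin 4 → ℝ := ∑ i, v i with hpdef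
  have hpfr : p ∈ frontier ((3 : ℝ) • Δ) := hsum
  obtain ⟨m₀, hm₀D, hm₀p⟩ := exists_dual_support Δ hconv hcomp.isClosed h0 hpfr
  -- lower bound: -3 ≤ pairing m p for all m in the dual
  have hDcomp : IsCompact (dualPolytope Δ) := hTeq ▸ T.finite_toSet.isCompact_convexHull ℝ
  have hpA : p ∈ (3 : ℝ) • Δ := by
    have := hpfr.1
    rwa [(hcomp.smul (3:ℝ)).isClosed.closure_eq] at this
  obtain ⟨q, hq, hq3⟩ := hpA
  have hlb : ∀ m ∈ dualPolytope Δ, -3 ≤ pairing m p := by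
    intro m hm
    rw [← hq3, pairing_smul_right]
    have := hm q hq
    linarith
  -- the face F
  set F : Set (Fin 4 → ℝ) := {m ∈ dualPolytope Δ | pairing m p = -3} with hF
  have hFne : F.Nonempty := ⟨m₀, hm₀D, hm₀p⟩
  have hFcomp : IsCompact F := by
    have hclosed : IsClosed {m : Fin 4 → ℝ | pairing m p = -3} :=
      isClosed_eq (pairing_continuous p) continuous_const
    exact hDcomp.inter_right hclosed
  have hExt : IsExtreme ℝ (dualPolytope Δ) F := by
    constructor
    · exact fun m hm => hm.1
    · rintro x hx y hy z ⟨hzD, hzp⟩ ⟨a, b, ha, hb, hab, hz⟩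
      have hxp := hlb x hx
      have hyp := hlb y hy
      have hcombo : a * pairing x p + b * pairing y p = -3 := by
        rw [← pairing_combo_left, hz, hzp]
      have hxe : pairing x p = -3 := by nlinarith
      have hye : pairing y p = -3 := by nlinarith
      exact ⟨hx, hxe⟩
  obtain ⟨m, hm⟩ := hFcomp.extremePoints_nonempty hFne
  have hmext : m ∈ Set.extremePoints ℝ (dualPolytope Δ) :=
    hExt.extremePoints_subset_extremePoints hm
  have hmlat : IsLatticePt m := by
    have : m ∈ (T : Set (Fin 4 → ℝ)) := by
      have := hmext
      rw [hTeq] at this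
      exact extremePoints_convexHull_subset this
    exact hTlat this
  have hmD : m ∈ dualPolytope Δ := hmext.1
  have hmp : pairing m p = -3 := hm.1.2
  -- integrality
  choose k hk using fun i => pairing_int hmlat (hvL i)
  have hbnd : ∀ i, -1 ≤ k i := by
    intro i
    have := hmD (v i) (hvΔ i)
    rw [hk i] at this
    exact_mod_cast this
  have hks : ∑ i, k i = -3 := by
    have : ((∑ i, k i : ℤ) : ℝ) = -3 := by
      push_cast
      have e : (∑ x, ((k x : ℤ) : ℝ)) = ∑ i, pairing m (v i) :=
        Finset.sum_congr rfl fun i _ => (hk i).symm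
      rw [e, ← pairing_sum_right, ← hpdef, hmp]
    exact_mod_cast this
  obtain ⟨l, hl0, hlrest⟩ := int_combo k hbnd hks
  refine ⟨m, hmlat, hmext, l, ?_, ?_⟩
  · rw [hk l, hl0]; norm_num
  · intro i hi
    rw [hk i, hlrest i hi]; norm_num
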